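/- Let m_0, m_1 ≥ 1 and prescribe degrees d(u_p) for white vertices u_1,...,u_{m_0} and d(v_q) for black vertices v_1,...,v_{m_1} with Σ_p d(u_p) = Σ_q d(v_q) = m_0 + m_1 - 1. Then the number of spanning trees of K_{m_0,m_1} in which each vertex has its prescribed degree equals (m_0 - 1)!(m_1 - 1)! / (∏_c (c!)^{k(0,c)+k(1,c)}), where k(0,c) (resp. k(1,c)) is the number of white (resp. black) vertices of degree c + 1. -/

import Mathlib

set_option linter.unusedSectionVars false
set_option maxHeartbeats 1600000

open SimpleGraph Set Finset

namespace STAux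

variable {V V₁ V₂ : Type} [DecidableEq V]

/-- walk in a closed set stays in the set -/
lemma mem_of_walk_closed {H : SimpleGraph V} {S : Set V}
    (hcl : ∀ x ∈ S, ∀ y, H.Adj x y → y ∈ S) :
    ∀ {x y : V} (_ : H.Walk x y), x ∈ S → y ∈ S := by
  intro x y p
  induction p with
  | nil => exact id
  | cons h q ih => exact fun hx => ih (hcl _ hx _ h)

/-- a cycle through a vertex yields two distinct neighbours of that vertex -/
lemma two_nbrs_of_cycle {H : SimpleGraph V} {x x₀ : V} {c : H.Walk x x}
    (hc : c.IsCycle) (hx₀ : x₀ ∈ c.support) :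
    ∃ z w, z ≠ w ∧ H.Adj x₀ z ∧ H.Adj x₀ w := by
  have hc' : (c.rotate x₀ hx₀).IsCycle := hc.rotate hx₀
  have hnn := hc'.not_nil
  rw [SimpleGraph.Walk.not_nil_iff] at hnn
  obtain ⟨z, h, q, hq⟩ := hnn
  rw [hq, SimpleGraph.Walk.cons_isCycle_iff] at hc'
  obtain ⟨hqp, he⟩ := hc'
  have hzx : x₀ ≠ z := h.ne
  obtain ⟨w, h2, q', hq'⟩ := SimpleGraph.Walk.exists_eq_cons_of_ne hzx q.reverse
  refine ⟨z, w, ?_, h, h2⟩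
  rintro rfl
  apply he
  have : s(x₀, z) ∈ q.reverse.edges := by rw [hq']; simp
  rwa [SimpleGraph.Walk.edges_reverse, List.mem_reverse] at this

/-- a path through an interior vertex yields two distinct neighbours -/
lemma two_nbrs_of_path {H : SimpleGraph V} {x y x₀ : V} {p : H.Walk x y}
    (hp : p.IsPath) (hx : x ≠ x₀) (hy : y ≠ x₀) (hmem : x₀ ∈ p.support) :
    ∃ z w, z ≠ w ∧ H.Adj x₀ z ∧ H.Adj x₀ w := by
  have hsplit := p.take_spec hmem
  have htr : p.IsTrail := hp.isTrail
  rw [← hsplit] at htr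
  have hdisj := htr.edges_nodup
  rw [SimpleGraph.Walk.edges_append] at hdisj
  have hdj := List.disjoint_of_nodup_append hdisj
  -- takeUntil : Walk x x₀ ; its reverse is Walk x₀ x
  obtain ⟨z, h1, q1, hq1⟩ :=
    SimpleGraph.Walk.exists_eq_cons_of_ne (Ne.symm hx) (p.takeUntil x₀ hmem).reverse
  obtain ⟨w, h2, q2, hq2⟩ :=
    SimpleGraph.Walk.exists_eq_cons_of_ne (Ne.symm hy) (p.dropUntil x₀ hmem)
  refine ⟨z, w, ?_, h1, h2⟩
  rintro rfl
  have e1 : s(x₀, z) ∈ (p.takeUntil x₀ hmem).edges := by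
    have : s(x₀, z) ∈ (p.takeUntil x₀ hmem).reverse.edges := by rw [hq1]; simp
    rwa [SimpleGraph.Walk.edges_reverse, List.mem_reverse] at this
  have e2 : s(x₀, z) ∈ (p.dropUntil x₀ hmem).edges := by rw [hq2]; simp
  exact hdj e1 e2

/-- lift a walk along `f` when its support lies in the range -/
lemma walk_lift {H : SimpleGraph V₂} (f : V₁ → V₂) (hf : Function.Injective f) :
    ∀ {x y : V₂} (p : H.Walk x y), (∀ z ∈ p.support, z ∈ Set.range f) →
    ∀ (u v : V₁) (hu : f u = x) (hv : f v = y),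
    ∃ q : (H.comap f).Walk u v,
      q.map (SimpleGraph.Hom.comap f H) = p.copy hu.symm hv.symm := by
  intro x y p
  induction p with
  | nil =>
    intro _ u v hu hv
    subst hu
    obtain rfl : v = u := hf (hv.trans rfl)
    exact ⟨SimpleGraph.Walk.nil, rfl⟩
  | @cons a b c h p ih =>
    intro hsup u v hu hv
    subst hu
    have hb : b ∈ Set.range f := hsup b (by simp)
    obtain ⟨w, hw⟩ := hb
    subst hw
    obtain ⟨q, hq⟩ := ih (fun z hz => hsup z (by simp [hz])) w v rfl hv
    refine ⟨SimpleGraph.Walk.cons (by simpa using h) q, ?_⟩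
    rw [SimpleGraph.Walk.map_cons, hq, SimpleGraph.Walk.copy_cons]
    rfl

lemma acyclic_comap {H : SimpleGraph V₂} {f : V₁ → V₂} (hf : Function.Injective f)
    (hH : H.IsAcyclic) : (H.comap f).IsAcyclic := by
  intro v q hq
  exact hH (q.map (SimpleGraph.Hom.comap f H)) (hq.map hf)

lemma isTree_comap_equiv (e : V₁ ≃ V₂) (H : SimpleGraph V₂) :
    (H.comap e).IsTree ↔ H.IsTree := by
  have hcc : ((H.comap ⇑e).comap ⇑e.symm) = H := by
    ext x y; simp
  constructor
  · rintro ⟨hconn, hac⟩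
    refine ⟨?_, ?_⟩
    · rw [← hcc]
      exact ((SimpleGraph.Iso.comap e.symm (H.comap ⇑e)).connected_iff).mpr hconn
    · rw [← hcc]
      exact acyclic_comap e.symm.injective hac
  · rintro ⟨hconn, hac⟩
    exact ⟨((SimpleGraph.Iso.comap e H).connected_iff).mpr hconn,
      acyclic_comap e.injective hac⟩

lemma ncard_preimage {f : V₁ → V₂} (hf : Function.Injective f) {S : Set V₂} {x₀ : V₂}
    (hS : S \ {x₀} ⊆ Set.range f) (hx₀ : x₀ ∉ Set.range f) :
    (f ⁻¹' S).ncard = (S \ {x₀}).ncard := by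
  have : f ⁻¹' S = f ⁻¹' (S \ {x₀}) := by
    ext z
    simp only [Set.mem_preimage, Set.mem_diff, Set.mem_singleton_iff]
    exact ⟨fun h => ⟨h, fun he => hx₀ ⟨z, he⟩⟩, fun h => h.1⟩
  rw [this, Set.ncard_preimage_of_injective_subset_range hf hS]

/-- The set of spanning trees of the complete bipartite graph with degree sequence `d`. -/
def TSet (A B : Type) [Fintype A] [Fintype B] (d : A ⊕ B → ℕ) :
    Set (SimpleGraph (A ⊕ B)) :=
  {H | H ≤ completeBipartiteGraph A B ∧ H.IsTree ∧
    ∀ v, (H.neighborSet v).ncard = d v}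

lemma uniq_nbr {H : SimpleGraph V} {x y z : V} (h1 : (H.neighborSet x).ncard = 1)
    (hy : H.Adj x y) (hz : H.Adj x z) : y = z := by
  obtain ⟨w, hw⟩ := Set.ncard_eq_one.mp h1
  have hy' : y ∈ H.neighborSet x := hy
  have hz' : z ∈ H.neighborSet x := hz
  rw [hw] at hy' hz'
  simp only [Set.mem_singleton_iff] at hy' hz'
  rw [hy', hz']

lemma nbr_singleton {H : SimpleGraph V} {x y : V} (h1 : (H.neighborSet x).ncard = 1)
    (hy : H.Adj x y) : H.neighborSet x = {y} := by
  obtain ⟨w, hw⟩ := Set.ncard_eq_one.mp h1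
  have hy' : y ∈ H.neighborSet x := hy
  rw [hw] at hy' ⊢
  simp only [Set.mem_singleton_iff] at hy'
  rw [hy']

/-- In a tree with at least two vertices every vertex has a neighbour. -/
lemma exists_nbr_of_tree [Fintype V] {H : SimpleGraph V} (ht : H.IsTree)
    (hV : 2 ≤ Fintype.card V) (v : V) : ∃ w, H.Adj v w := by
  obtain ⟨x, hx⟩ := Fintype.exists_ne_of_one_lt_card (by omega) v
  have hr : H.Reachable v x := ht.isConnected.preconnected v x
  obtain ⟨p⟩ := hr
  obtain ⟨w, h, q, _⟩ := SimpleGraph.Walk.exists_eq_cons_of_ne (Ne.symm hx) p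
  exact ⟨w, h⟩

lemma TSet_empty_of_deg_zero (A B : Type) [Fintype A] [Fintype B] [DecidableEq A]
    [DecidableEq B] (hA : 0 < Fintype.card A) (hB : 0 < Fintype.card B)
    (hcard : 2 ≤ Fintype.card A + Fintype.card B)
    (d : A ⊕ B → ℕ) (v₀ : A ⊕ B) (h0 : d v₀ = 0) : TSet A B d = ∅ := by
  ext H
  simp only [Set.mem_empty_iff_false, iff_false]
  rintro ⟨-, ht, hdeg⟩
  have h2 : 2 ≤ Fintype.card (A ⊕ B) := by
    rw [Fintype.card_sum]; omega
  obtain ⟨w, hw⟩ := exists_nbr_of_tree ht h2 v₀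
  have : w ∈ H.neighborSet v₀ := hw
  have hpos : 0 < (H.neighborSet v₀).ncard := by
    rw [Set.ncard_pos (Set.toFinite _)]
    exact ⟨w, this⟩
  rw [hdeg v₀, h0] at hpos
  omega

lemma acyclic_comap' {V₁ V₂ : Type} {H : SimpleGraph V₂} {f : V₁ → V₂}
    (hf : Function.Injective f) (hH : H.IsAcyclic) : (H.comap f).IsAcyclic := by
  intro v q hq
  exact hH (q.map (SimpleGraph.Hom.comap f H)) (hq.map hf)

lemma isTree_comap_equiv' {V₁ V₂ : Type} (e : V₁ ≃ V₂) (H : SimpleGraph V₂) :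
    (H.comap e).IsTree ↔ H.IsTree := by
  have hcc : ((H.comap ⇑e).comap ⇑e.symm) = H := by ext x y; simp
  constructor
  · rintro ⟨hconn, hac⟩
    exact ⟨hcc ▸ ((SimpleGraph.Iso.comap e.symm (H.comap ⇑e)).connected_iff).mpr hconn,
      hcc ▸ acyclic_comap' e.symm.injective hac⟩
  · rintro ⟨hconn, hac⟩
    exact ⟨((SimpleGraph.Iso.comap e H).connected_iff).mpr hconn,
      acyclic_comap' e.injective hac⟩

lemma mem_TSet_comap (A B : Type) [Fintype A] [Fintype B] [DecidableEq A] [DecidableEq B]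
    (d : A ⊕ B → ℕ) (H : SimpleGraph (A ⊕ B)) :
    H.comap ⇑(Equiv.sumComm B A) ∈ TSet B A (d ∘ ⇑(Equiv.sumComm B A)) ↔ H ∈ TSet A B d := by
  set e := Equiv.sumComm B A with he
  constructor
  · rintro ⟨hle, ht, hdeg⟩
    refine ⟨?_, ?_, ?_⟩
    · intro x y hxy
      have hx : (H.comap ⇑e).Adj (e.symm x) (e.symm y) := by
        simpa using hxy
      have := hle hx
      revert this
      rcases x with x | x <;> rcases y with y | y <;> simp [he]
    · exact (isTree_comap_equiv' e H).mp ht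
    · intro v
      have := hdeg (e.symm v)
      simp only [Function.comp_apply, Equiv.apply_symm_apply] at this
      rw [← this]
      have hset : (H.comap ⇑e).neighborSet (e.symm v) = ⇑e ⁻¹' (H.neighborSet v) := by
        ext w; simp [SimpleGraph.neighborSet]
      rw [hset, Set.ncard_preimage_of_injective_subset_range e.injective
        (by rw [e.surjective.range_eq]; exact Set.subset_univ _)]
  · rintro ⟨hle, ht, hdeg⟩
    refine ⟨?_, ?_, ?_⟩
    · intro x y hxy
      have := hle hxy
      revert this
      rcases x with x | x <;> rcases y with y | y <;> simp [he]
    · exact (isTree_comap_equiv' e H).mpr ht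
    · intro w
      have hset : (H.comap ⇑e).neighborSet w = ⇑e ⁻¹' (H.neighborSet (e w)) := by
        ext w'; simp [SimpleGraph.neighborSet]
      rw [hset, Set.ncard_preimage_of_injective_subset_range e.injective
        (by rw [e.surjective.range_eq]; exact Set.subset_univ _)]
      exact hdeg (e w)

lemma ncard_TSet_swap (A B : Type) [Fintype A] [Fintype B] [DecidableEq A] [DecidableEq B]
    (d : A ⊕ B → ℕ) :
    (TSet A B d).ncard = (TSet B A (d ∘ ⇑(Equiv.sumComm B A))).ncard := by
  have hinj : Function.Injective (fun H : SimpleGraph (A ⊕ B) =>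
      H.comap ⇑(Equiv.sumComm B A)) := by
    intro H₁ H₂ h
    ext x y
    have h1 : (H₁.comap ⇑(Equiv.sumComm B A)).Adj ((Equiv.sumComm B A).symm x)
        ((Equiv.sumComm B A).symm y) ↔ H₁.Adj x y := by simp
    have h2 : (H₂.comap ⇑(Equiv.sumComm B A)).Adj ((Equiv.sumComm B A).symm x)
        ((Equiv.sumComm B A).symm y) ↔ H₂.Adj x y := by simp
    rw [← h1, ← h2]
    simp only at h
    rw [h]
  have himg : TSet B A (d ∘ ⇑(Equiv.sumComm B A)) =
      (fun H : SimpleGraph (A ⊕ B) => H.comap ⇑(Equiv.sumComm B A)) '' TSet A B d := by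
    ext H'
    constructor
    · intro h
      refine ⟨H'.comap ⇑(Equiv.sumComm A B), ?_, ?_⟩
      · have hmem := (mem_TSet_comap B A (d ∘ ⇑(Equiv.sumComm B A)) H').mpr h
        have hdd : (d ∘ ⇑(Equiv.sumComm B A)) ∘ ⇑(Equiv.sumComm A B) = d := by
          funext v; simp
        rwa [hdd] at hmem
      · simp only
        rw [SimpleGraph.comap_comap]
        ext u v; simp
    · rintro ⟨H, hH, rfl⟩
      exact (mem_TSet_comap A B d H).mpr hH
  rw [himg, Set.ncard_image_of_injective _ hinj]

lemma step_bij (A B : Type) [Fintype A] [Fintype B] [DecidableEq A] [DecidableEq B]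
    (d : A ⊕ B → ℕ) (hd : ∀ v, 1 ≤ d v) (a₀ : A) (hda₀ : d (Sum.inl a₀) = 1)
    (hA : 2 ≤ Fintype.card A) (b₀ : B) :
    {H | H ∈ TSet A B d ∧ H.Adj (Sum.inl a₀) (Sum.inr b₀)}.ncard
      = (TSet {a : A // a ≠ a₀} B
          (Sum.elim (fun a => d (Sum.inl a.1))
            (fun b => if b = b₀ then d (Sum.inr b) - 1 else d (Sum.inr b)))).ncard := by
  classical
  set x₀ : A ⊕ B := Sum.inl a₀ with hx₀def
  set d' : {a : A // a ≠ a₀} ⊕ B → ℕ := Sum.elim (fun a => d (Sum.inl a.1))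
      (fun b => if b = b₀ then d (Sum.inr b) - 1 else d (Sum.inr b)) with hd'def
  set f : {a : A // a ≠ a₀} ⊕ B → A ⊕ B := Sum.map Subtype.val id with hfdef
  have hfinj : Function.Injective f := by
    rintro (⟨a, ha⟩ | b) (⟨a', ha'⟩ | b') h <;> simp_all [f]
  have hrange : ∀ z : A ⊕ B, z ≠ x₀ → z ∈ Set.range f := by
    rintro (a | b) h
    · exact ⟨Sum.inl ⟨a, by simpa [x₀] using h⟩, rfl⟩
    · exact ⟨Sum.inr b, rfl⟩
  have hx₀r : x₀ ∉ Set.range f := by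
    rintro ⟨(⟨a, ha⟩ | b), h⟩ <;> simp_all [f, x₀]
  have hb₀x₀ : x₀ ≠ Sum.inr b₀ := by simp [x₀]
  set S : Set (SimpleGraph (A ⊕ B)) :=
    {H | H ∈ TSet A B d ∧ H.Adj x₀ (Sum.inr b₀)} with hSdef
  -- the unique-neighbour characterisation for members of S
  have hchar : ∀ H ∈ S, ∀ y, H.Adj x₀ y ↔ y = Sum.inr b₀ := by
    rintro H ⟨⟨hle, htree, hdeg⟩, hadj⟩ y
    constructor
    · intro h
      have := nbr_singleton (x := x₀) (by rw [hdeg]; exact hda₀) hadj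
      have hy : y ∈ H.neighborSet x₀ := h
      rw [this] at hy
      simpa using hy
    · rintro rfl; exact hadj
  -- forward membership
  have hfwd : ∀ H ∈ S, H.comap f ∈ TSet {a : A // a ≠ a₀} B d' := by
    rintro H hHS
    obtain ⟨⟨hle, htree, hdeg⟩, hadj⟩ := hHS
    have hnb : H.neighborSet x₀ = {Sum.inr b₀} :=
      nbr_singleton (by rw [hdeg]; exact hda₀) hadj
    have hne' : Nonempty {a : A // a ≠ a₀} := by
      obtain ⟨a₁, ha₁⟩ := Fintype.exists_ne_of_one_lt_card (by omega) a₀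
      exact ⟨⟨a₁, ha₁⟩⟩
    refine ⟨?_, ⟨?_, acyclic_comap hfinj htree.2⟩, ?_⟩
    · intro u v huv
      have := hle huv
      revert this
      rcases u with ⟨a, ha⟩ | b <;> rcases v with ⟨a', ha'⟩ | b' <;> simp [f]
    · -- connectedness of the comap
      haveI := hne'
      constructor
      intro u v
      obtain ⟨p, hp, -⟩ := htree.existsUnique_path (f u) (f v)
      have hfu : f u ≠ x₀ := fun h => hx₀r ⟨u, h⟩
      have hfv : f v ≠ x₀ := fun h => hx₀r ⟨v, h⟩
      have hxs : x₀ ∉ p.support := by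
        intro hxs
        obtain ⟨z, w, hzw, hz, hw⟩ := two_nbrs_of_path hp hfu hfv hxs
        have hz' : z ∈ H.neighborSet x₀ := hz
        have hw' : w ∈ H.neighborSet x₀ := hw
        rw [hnb] at hz' hw'
        simp only [Set.mem_singleton_iff] at hz' hw'
        exact hzw (hz'.trans hw'.symm)
      have hsup : ∀ z ∈ p.support, z ∈ Set.range f :=
        fun z hzs => hrange z (fun h => hxs (h ▸ hzs))
      obtain ⟨q, -⟩ := walk_lift f hfinj p hsup u v rfl rfl
      exact q.reachable
    · -- degrees
      intro v
      have hpre : (H.comap f).neighborSet v = f ⁻¹' (H.neighborSet (f v)) := rfl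
      have hSsub : H.neighborSet (f v) \ {x₀} ⊆ Set.range f :=
        fun z hz => hrange z hz.2
      rw [hpre, ncard_preimage hfinj hSsub hx₀r]
      rcases v with ⟨a, ha⟩ | b
      · have hnot : x₀ ∉ H.neighborSet (f (Sum.inl ⟨a, ha⟩)) := by
          intro hmem'
          have := hle hmem'
          simp [f, x₀] at this
        rw [Set.diff_singleton_eq_self hnot]
        exact hdeg _
      · have hxe : x₀ ∈ H.neighborSet (f (Sum.inr b)) ↔ b = b₀ := by
          constructor
          · intro hmem'
            have h2 : Sum.inr b ∈ H.neighborSet x₀ := (H.adj_symm hmem')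
            rw [hnb] at h2
            simpa using h2
          · rintro rfl
            exact hadj.symm
        by_cases hb : b = b₀
        · subst hb
          rw [Set.ncard_diff_singleton_of_mem (hxe.mpr rfl), hdeg]
          simp [d', f]
        · rw [Set.diff_singleton_eq_self (fun h => hb (hxe.mp h)), hdeg]
          simp [d', f, hb]
  -- injectivity on S
  have hinjOn : Set.InjOn (fun H => H.comap f) S := by
    intro H₁ hm₁ H₂ hm₂ heq
    have heq2 : H₁.comap f = H₂.comap f := heq
    ext x y
    rcases eq_or_ne x x₀ with rfl | hx
    · rcases eq_or_ne y x₀ with rfl | hy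
      · simp
      · rw [hchar H₁ hm₁ y, hchar H₂ hm₂ y]
    · rcases eq_or_ne y x₀ with rfl | hy
      · rw [H₁.adj_comm, H₂.adj_comm, hchar H₁ hm₁ x, hchar H₂ hm₂ x]
      · obtain ⟨u, rfl⟩ := hrange x hx
        obtain ⟨v, rfl⟩ := hrange y hy
        change (H₁.comap f).Adj u v ↔ (H₂.comap f).Adj u v
        rw [heq2]
  -- surjectivity
  have hsurj : ∀ G ∈ TSet {a : A // a ≠ a₀} B d', ∃ H ∈ S, H.comap f = G := by
    rintro G ⟨hGle, hGtree, hGdeg⟩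
    set H : SimpleGraph (A ⊕ B) :=
      G.map (⟨f, hfinj⟩ : _ ↪ _) ⊔ fromEdgeSet {s(x₀, Sum.inr b₀)} with hHdef
    have hHadj : ∀ x y, H.Adj x y ↔
        ((∃ u v, G.Adj u v ∧ f u = x ∧ f v = y) ∨
          ((x = x₀ ∧ y = Sum.inr b₀) ∨ (x = Sum.inr b₀ ∧ y = x₀))) := by
      intro x y
      simp only [H, sup_adj]
      rw [map_adj]
      simp only [fromEdgeSet_adj, Set.mem_singleton_iff,
        Function.Embedding.coeFn_mk, Sym2.eq_iff]
      constructor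
      · rintro (⟨u, v, h, h1, h2⟩ | ⟨(⟨h1, h2⟩ | ⟨h1, h2⟩), -⟩)
        · exact Or.inl ⟨u, v, h, h1, h2⟩
        · exact Or.inr (Or.inl ⟨h1, h2⟩)
        · exact Or.inr (Or.inr ⟨h1, h2⟩)
      · rintro (⟨u, v, h, h1, h2⟩ | (⟨rfl, rfl⟩ | ⟨rfl, rfl⟩))
        · exact Or.inl ⟨u, v, h, h1, h2⟩
        · exact Or.inr ⟨Or.inl ⟨rfl, rfl⟩, hb₀x₀⟩
        · exact Or.inr ⟨Or.inr ⟨rfl, rfl⟩, hb₀x₀.symm⟩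
    have hadjH : H.Adj x₀ (Sum.inr b₀) := (hHadj _ _).mpr (Or.inr (Or.inl ⟨rfl, rfl⟩))
    have hcomap : H.comap f = G := by
      ext u v
      rw [SimpleGraph.comap_adj, hHadj]
      constructor
      · rintro (⟨u', v', h, h1, h2⟩ | (⟨h1, -⟩ | ⟨-, h2⟩))
        · rwa [← hfinj h1, ← hfinj h2]
        · exact absurd h1 (fun h => hx₀r ⟨u, h⟩)
        · exact absurd h2 (fun h => hx₀r ⟨v, h⟩)
      · intro h
        exact Or.inl ⟨u, v, h, rfl, rfl⟩
    have hnbx₀ : H.neighborSet x₀ = {Sum.inr b₀} := by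
      ext y
      simp only [SimpleGraph.mem_neighborSet, Set.mem_singleton_iff]
      rw [hHadj]
      constructor
      · rintro (⟨u', v', h, h1, -⟩ | (⟨-, h2⟩ | ⟨h1, -⟩))
        · exact absurd h1 (fun h => hx₀r ⟨u', h⟩)
        · exact h2
        · exact absurd h1 hb₀x₀
      · rintro rfl
        exact Or.inr (Or.inl ⟨rfl, rfl⟩)
    have hHle : H ≤ completeBipartiteGraph A B := by
      intro x y h
      rw [hHadj] at h
      rcases h with ⟨u, v, h, rfl, rfl⟩ | (⟨rfl, rfl⟩ | ⟨rfl, rfl⟩)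
      · have := hGle h
        revert this
        rcases u with ⟨a, ha⟩ | b <;> rcases v with ⟨a', ha'⟩ | b' <;> simp [f]
      · simp [x₀]
      · simp [x₀]
    let hom : G →g H :=
      ⟨f, fun {u v} h => (hHadj _ _).mpr (Or.inl ⟨u, v, h, rfl, rfl⟩)⟩
    have homcoe : ∀ z, hom z = f z := fun _ => rfl
    haveI : Nonempty (A ⊕ B) := ⟨Sum.inl a₀⟩
    have hHtree : H.IsTree := by
      constructor
      · -- connected
        have hreach : ∀ z : A ⊕ B, H.Reachable z x₀ := by
          intro z
          rcases eq_or_ne z x₀ with rfl | hz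
          · exact Reachable.refl _
          · obtain ⟨u, rfl⟩ := hrange z hz
            have h1 : G.Reachable u (Sum.inr b₀) := hGtree.1.preconnected u (Sum.inr b₀)
            have h2 := h1.map hom
            rw [homcoe, homcoe] at h2
            exact h2.trans hadjH.symm.reachable
        constructor
        intro x y
        exact (hreach x).trans (hreach y).symm
      · -- acyclic
        intro x c hc
        rcases Classical.em (x₀ ∈ c.support) with hxs | hxs
        · obtain ⟨z, w, hzw, hz, hw⟩ := two_nbrs_of_cycle hc hxs
          have hz' : z ∈ H.neighborSet x₀ := hz
          have hw' : w ∈ H.neighborSet x₀ := hw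
          rw [hnbx₀] at hz' hw'
          simp only [Set.mem_singleton_iff] at hz' hw'
          exact hzw (hz'.trans hw'.symm)
        · have hx : x ≠ x₀ := fun h => hxs (h ▸ c.start_mem_support)
          obtain ⟨u, rfl⟩ := hrange x hx
          have hsup : ∀ z ∈ c.support, z ∈ Set.range f :=
            fun z hzs => hrange z (fun h => hxs (h ▸ hzs))
          obtain ⟨q, hq⟩ := walk_lift f hfinj c hsup u u rfl rfl
          have hq' : q.map (SimpleGraph.Hom.comap f H) = c := by
            rw [hq, SimpleGraph.Walk.copy_rfl_rfl]
          have hqc : q.IsCycle := by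
            have : (q.map (SimpleGraph.Hom.comap f H)).IsCycle := hq' ▸ hc
            exact (SimpleGraph.Walk.map_isCycle_iff_of_injective
              (f := SimpleGraph.Hom.comap f H) hfinj).mp this
          have : ∃ q' : G.Walk u u, q'.IsCycle := by
            rw [← hcomap]; exact ⟨q, hqc⟩
          obtain ⟨q', hq'c⟩ := this
          exact hGtree.2 q' hq'c
    have hHdeg : ∀ v, (H.neighborSet v).ncard = d v := by
      intro v
      rcases eq_or_ne v x₀ with rfl | hv
      · rw [hnbx₀, Set.ncard_singleton, hda₀]
      · obtain ⟨u, rfl⟩ := hrange v hv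
        by_cases hub : u = Sum.inr b₀
        · subst hub
          have hset : H.neighborSet (f (Sum.inr b₀)) =
              insert x₀ (f '' G.neighborSet (Sum.inr b₀)) := by
            ext y
            simp only [SimpleGraph.mem_neighborSet, Set.mem_insert_iff, Set.mem_image]
            rw [hHadj]
            constructor
            · rintro (⟨u', v', h, h1, h2⟩ | (⟨h1, -⟩ | ⟨-, h2⟩))
              · have hu' : u' = Sum.inr b₀ := hfinj h1
                subst hu'
                exact Or.inr ⟨v', h, h2⟩
              · exact absurd h1 (fun h => hx₀r ⟨Sum.inr b₀, h⟩)
              · exact Or.inl h2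
            · rintro (rfl | ⟨v', h, rfl⟩)
              · exact Or.inr (Or.inr ⟨rfl, rfl⟩)
              · exact Or.inl ⟨Sum.inr b₀, v', h, rfl, rfl⟩
          rw [hset, Set.ncard_insert_of_notMem
              (fun hmem => by obtain ⟨w', -, hw'⟩ := hmem; exact hx₀r ⟨w', hw'⟩)
              (Set.toFinite _),
            Set.ncard_image_of_injective _ hfinj, hGdeg (Sum.inr b₀)]
          have h1 := hd (Sum.inr b₀)
          show d' (Sum.inr b₀) + 1 = d (Sum.inr b₀)
          have h2 : d' (Sum.inr b₀) = d (Sum.inr b₀) - 1 := by simp [d']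
          omega
        · have hfune : f u ≠ Sum.inr b₀ := fun h => hub (hfinj (h.trans rfl))
          have hset : H.neighborSet (f u) = f '' G.neighborSet u := by
            ext y
            simp only [SimpleGraph.mem_neighborSet, Set.mem_image]
            rw [hHadj]
            constructor
            · rintro (⟨u', v', h, h1, h2⟩ | (⟨h1, -⟩ | ⟨h1, -⟩))
              · have hu' : u' = u := hfinj h1
                subst hu'
                exact ⟨v', h, h2⟩
              · exact absurd h1 (fun h => hx₀r ⟨u, h⟩)
              · exact absurd h1 hfune
            · rintro ⟨v', h, rfl⟩
              exact Or.inl ⟨u, v', h, rfl, rfl⟩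
          rw [hset, Set.ncard_image_of_injective _ hfinj, hGdeg u]
          rcases u with ⟨a, ha⟩ | b
          · rfl
          · have hb : b ≠ b₀ := fun h => hub (by rw [h])
            show d' (Sum.inr b) = d (Sum.inr b)
            simp only [d', Sum.elim_inr, if_neg hb]
    exact ⟨H, ⟨⟨hHle, hHtree, hHdeg⟩, hadjH⟩, hcomap⟩
  -- final count
  have himg : (fun H : SimpleGraph (A ⊕ B) => H.comap f) '' S
      = TSet {a : A // a ≠ a₀} B d' := by
    ext G
    constructor
    · rintro ⟨H, hH, rfl⟩
      exact hfwd H hH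
    · intro hG
      obtain ⟨H, hH, hcomap⟩ := hsurj G hG
      exact ⟨H, hH, hcomap⟩
  rw [← himg, Set.ncard_image_of_injOn hinjOn]

lemma main_step (n : ℕ)
    (IH : ∀ m, m < n → ∀ (A B : Type) (_ : Fintype A) (_ : Fintype B)
      (_ : DecidableEq A) (_ : DecidableEq B),
      Fintype.card A + Fintype.card B = m → 0 < Fintype.card A → 0 < Fintype.card B →
      ∀ d : A ⊕ B → ℕ, (∀ v, 1 ≤ d v) →
      ((∑ p, d (Sum.inl p)) = Fintype.card A + Fintype.card B - 1) →
      ((∑ q, d (Sum.inr q)) = Fintype.card A + Fintype.card B - 1) →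
      (TSet A B d).ncard * ∏ v, (d v - 1).factorial
        = (Fintype.card A - 1).factorial * (Fintype.card B - 1).factorial)
    (A B : Type) [Fintype A] [Fintype B] [DecidableEq A] [DecidableEq B]
    (hn : Fintype.card A + Fintype.card B = n)
    (hA : 0 < Fintype.card A) (hB : 0 < Fintype.card B)
    (hBA : Fintype.card B ≤ Fintype.card A)
    (d : A ⊕ B → ℕ) (hd : ∀ v, 1 ≤ d v)
    (hs0 : (∑ p, d (Sum.inl p)) = Fintype.card A + Fintype.card B - 1)
    (hs1 : (∑ q, d (Sum.inr q)) = Fintype.card A + Fintype.card B - 1) :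
    (TSet A B d).ncard * ∏ v, (d v - 1).factorial
      = (Fintype.card A - 1).factorial * (Fintype.card B - 1).factorial := by
  classical
  rcases Nat.lt_or_ge (Fintype.card A) 2 with hlt2 | hge2
  · -- base case : both sides singletons
    have hA1 : Fintype.card A = 1 := by omega
    have hB1 : Fintype.card B = 1 := by omega
    obtain ⟨a, ha⟩ := Fintype.card_eq_one_iff.mp hA1
    obtain ⟨b, hb⟩ := Fintype.card_eq_one_iff.mp hB1
    have hvert : ∀ v : A ⊕ B, v = Sum.inl a ∨ v = Sum.inr b := by
      rintro (x | y)
      · exact Or.inl (by rw [ha x])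
      · exact Or.inr (by rw [hb y])
    haveI : Subsingleton A := Fintype.card_le_one_iff_subsingleton.mp (by omega)
    haveI : Subsingleton B := Fintype.card_le_one_iff_subsingleton.mp (by omega)
    have hda : d (Sum.inl a) = 1 := by
      have h1 : ∑ p, d (Sum.inl p) = d (Sum.inl a) :=
        Fintype.sum_subsingleton (fun p => d (Sum.inl p)) a
      rw [hA1, hB1] at hs0
      omega
    have hdb : d (Sum.inr b) = 1 := by
      have h1 : ∑ q, d (Sum.inr q) = d (Sum.inr b) :=
        Fintype.sum_subsingleton (fun q => d (Sum.inr q)) b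
      rw [hA1, hB1] at hs1
      omega
    have hTeq : TSet A B d = {completeBipartiteGraph A B} := by
      ext H
      simp only [Set.mem_singleton_iff]
      constructor
      · rintro ⟨hle, htree, hdeg⟩
        have hadj : H.Adj (Sum.inl a) (Sum.inr b) := by
          obtain ⟨p⟩ := htree.1.preconnected (Sum.inl a) (Sum.inr b)
          obtain ⟨w, hadj', q, -⟩ :=
            SimpleGraph.Walk.exists_eq_cons_of_ne (by simp) p
          rcases hvert w with rfl | rfl
          · exact absurd hadj' H.irrefl
          · exact hadj'
        ext x y
        rcases hvert x with rfl | rfl <;> rcases hvert y with rfl | rfl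
        · constructor
          · intro h; exact absurd h H.irrefl
          · intro h; simp at h
        · constructor
          · intro _; simp
          · intro _; exact hadj
        · constructor
          · intro _; simp
          · intro _; exact hadj.symm
        · constructor
          · intro h; exact absurd h H.irrefl
          · intro h; simp at h
      · rintro rfl
        haveI : Nonempty (A ⊕ B) := ⟨Sum.inl a⟩
        have hcadj : (completeBipartiteGraph A B).Adj (Sum.inl a) (Sum.inr b) := by simp
        refine ⟨le_refl _, ⟨?_, ?_⟩, ?_⟩
        · constructor
          intro x y
          rcases hvert x with rfl | rfl <;> rcases hvert y with rfl | rfl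
          · exact Reachable.refl _
          · exact hcadj.reachable
          · exact hcadj.symm.reachable
          · exact Reachable.refl _
        · intro x c hc
          obtain ⟨z, w, hzw, hz, hw⟩ := two_nbrs_of_cycle hc c.start_mem_support
          rcases hvert x with rfl | rfl
          · rcases hvert z with rfl | rfl
            · simp at hz
            · rcases hvert w with rfl | rfl
              · simp at hw
              · exact hzw rfl
          · rcases hvert z with rfl | rfl
            · rcases hvert w with rfl | rfl
              · exact hzw rfl
              · simp at hw
            · simp at hz
        · intro v
          rcases hvert v with rfl | rfl
          · have hset : (completeBipartiteGraph A B).neighborSet (Sum.inl a)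
                = {Sum.inr b} := by
              ext z
              rcases hvert z with rfl | rfl <;> simp
            rw [hset, Set.ncard_singleton, hda]
          · have hset : (completeBipartiteGraph A B).neighborSet (Sum.inr b)
                = {Sum.inl a} := by
              ext z
              rcases hvert z with rfl | rfl <;> simp
            rw [hset, Set.ncard_singleton, hdb]
    rw [hTeq, Set.ncard_singleton, one_mul, hA1, hB1]
    have hprod1 : ∏ v : A ⊕ B, (d v - 1).factorial = 1 := by
      apply Finset.prod_eq_one
      intro v _
      rcases hvert v with rfl | rfl
      · rw [hda]; rfl
      · rw [hdb]; rfl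
    rw [hprod1]
    simp
  · -- inductive step
    have hleaf : ∃ a₀, d (Sum.inl a₀) = 1 := by
      by_contra hcon
      push_neg at hcon
      have h2d : ∀ a : A, 2 ≤ d (Sum.inl a) := fun a => by
        have h1 := hd (Sum.inl a); have h2 := hcon a; omega
      have hge : 2 * Fintype.card A ≤ ∑ p, d (Sum.inl p) := by
        calc 2 * Fintype.card A = ∑ _p : A, 2 := by
              rw [Finset.sum_const, Finset.card_univ]; ring
          _ ≤ _ := Finset.sum_le_sum (fun a _ => h2d a)
      omega
    obtain ⟨a₀, hda₀⟩ := hleaf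
    have hA' : Fintype.card {a : A // a ≠ a₀} = Fintype.card A - 1 := by
      have h := Fintype.card_subtype_compl (fun a : A => a = a₀)
      rw [Fintype.card_subtype_eq] at h
      exact h
    set Sb : B → Set (SimpleGraph (A ⊕ B)) := fun b =>
      {H | H ∈ TSet A B d ∧ H.Adj (Sum.inl a₀) (Sum.inr b)} with hSbdef
    have hSfin : (TSet A B d).Finite := Set.toFinite _
    have hfin : ∀ b, (Sb b).Finite := fun b => Set.toFinite _
    have hcover : hSfin.toFinset = Finset.univ.biUnion (fun b => (hfin b).toFinset) := by
      ext H
      simp only [Set.Finite.mem_toFinset, Finset.mem_biUnion, Finset.mem_univ, true_and]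
      constructor
      · intro hH
        obtain ⟨hle, htree, hdeg⟩ := hH
        have h1 : (H.neighborSet (Sum.inl a₀)).ncard = 1 := by rw [hdeg]; exact hda₀
        obtain ⟨w, hw⟩ := Set.ncard_eq_one.mp h1
        have hadj : H.Adj (Sum.inl a₀) w := by
          have : w ∈ H.neighborSet (Sum.inl a₀) := by rw [hw]; rfl
          exact this
        rcases w with a | b
        · exact absurd (hle hadj) (by simp)
        · exact ⟨b, ⟨⟨hle, htree, hdeg⟩, hadj⟩⟩
      · rintro ⟨b, hbmem⟩
        exact hbmem.1
    have hdisj : ∀ b ∈ (Finset.univ : Finset B), ∀ b' ∈ (Finset.univ : Finset B),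
        b ≠ b' → Disjoint ((hfin b).toFinset) ((hfin b').toFinset) := by
      intro b _ b' _ hbb'
      rw [Finset.disjoint_left]
      intro H hHb hHb'
      simp only [Set.Finite.mem_toFinset] at hHb hHb'
      obtain ⟨⟨hle, htree, hdeg⟩, hadj⟩ := hHb
      have h2 := uniq_nbr (by rw [hdeg]; exact hda₀) hadj hHb'.2
      simp only [Sum.inr.injEq] at h2
      exact hbb' h2
    have hcount : (TSet A B d).ncard = ∑ b, (Sb b).ncard := by
      rw [Set.ncard_eq_toFinset_card _ hSfin, hcover, Finset.card_biUnion hdisj]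
      exact Finset.sum_congr rfl (fun b _ => (Set.ncard_eq_toFinset_card _ (hfin b)).symm)
    have hkey : ∀ b : B, (Sb b).ncard * ∏ v, (d v - 1).factorial
        = (Fintype.card A - 2).factorial * (Fintype.card B - 1).factorial
            * (d (Sum.inr b) - 1) := by
      intro b
      set d' : {a : A // a ≠ a₀} ⊕ B → ℕ := Sum.elim (fun a => d (Sum.inl a.1))
        (fun b' => if b' = b then d (Sum.inr b') - 1 else d (Sum.inr b')) with hd'def
      have hbij : (Sb b).ncard = (TSet {a : A // a ≠ a₀} B d').ncard :=
        step_bij A B d hd a₀ hda₀ hge2 b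
      -- split the big product
      have hsubA : ∀ g : A → ℕ, ∏ x : {a : A // a ≠ a₀}, g x.1
          = ∏ x ∈ Finset.univ.erase a₀, g x := by
        intro g
        rw [Finset.prod_subtype (p := fun a : A => a ≠ a₀) (Finset.univ.erase a₀)
          (fun x => by simp [Finset.mem_erase]) g]
      have hsubAs : ∀ g : A → ℕ, ∑ x : {a : A // a ≠ a₀}, g x.1
          = ∑ x ∈ Finset.univ.erase a₀, g x := by
        intro g
        rw [Finset.sum_subtype (p := fun a : A => a ≠ a₀) (Finset.univ.erase a₀)
          (fun x => by simp [Finset.mem_erase]) g]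
      rcases Nat.lt_or_ge (d (Sum.inr b)) 2 with hdb | hdb
      · -- degenerate : empty on both sides
        have hdb1 : d (Sum.inr b) = 1 := by have := hd (Sum.inr b); omega
        have hz : d' (Sum.inr b) = 0 := by simp [d', hdb1]
        have hempty : TSet {a : A // a ≠ a₀} B d' = ∅ :=
          TSet_empty_of_deg_zero _ _ (by rw [hA']; omega) hB (by rw [hA']; omega)
            d' (Sum.inr b) hz
        rw [hbij, hempty, hdb1]
        simp
      · -- apply the induction hypothesis
        have hprodsplit : (∏ v : A ⊕ B, (d v - 1).factorial)
            = (∏ v : {a : A // a ≠ a₀} ⊕ B, (d' v - 1).factorial) * (d (Sum.inr b) - 1) := by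
          rw [Fintype.prod_sum_type, Fintype.prod_sum_type]
          have e1 : ∏ x : {a : A // a ≠ a₀}, (d' (Sum.inl x) - 1).factorial
              = ∏ x ∈ Finset.univ.erase a₀, (d (Sum.inl x) - 1).factorial :=
            hsubA (fun x => (d (Sum.inl x) - 1).factorial)
          have e2 : ∏ x : A, (d (Sum.inl x) - 1).factorial
              = (d (Sum.inl a₀) - 1).factorial
                * ∏ x ∈ Finset.univ.erase a₀, (d (Sum.inl x) - 1).factorial :=
            (Finset.mul_prod_erase _ _ (Finset.mem_univ a₀)).symm
          have e3 : ∏ x : B, (d (Sum.inr x) - 1).factorial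
              = (d (Sum.inr b) - 1).factorial
                * ∏ x ∈ Finset.univ.erase b, (d (Sum.inr x) - 1).factorial :=
            (Finset.mul_prod_erase _ _ (Finset.mem_univ b)).symm
          have e4 : ∏ x : B, (d' (Sum.inr x) - 1).factorial
              = (d' (Sum.inr b) - 1).factorial
                * ∏ x ∈ Finset.univ.erase b, (d' (Sum.inr x) - 1).factorial :=
            (Finset.mul_prod_erase _ _ (Finset.mem_univ b)).symm
          have e5 : ∏ x ∈ Finset.univ.erase b, (d' (Sum.inr x) - 1).factorial
              = ∏ x ∈ Finset.univ.erase b, (d (Sum.inr x) - 1).factorial := by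
            refine Finset.prod_congr rfl (fun x hx => ?_)
            simp only [d', Sum.elim_inr, if_neg (Finset.mem_erase.mp hx).1]
          have e6 : d' (Sum.inr b) = d (Sum.inr b) - 1 := by
            simp [d']
          have e7 : (d (Sum.inr b) - 1).factorial
              = (d (Sum.inr b) - 1) * (d (Sum.inr b) - 1 - 1).factorial := by
            exact (Nat.mul_factorial_pred (by omega)).symm
          rw [e1, e2, e3, e4, e5, e6, e7, hda₀]
          simp only [Nat.sub_self, Nat.factorial_zero, one_mul]
          ring
        have hd' : ∀ v, 1 ≤ d' v := by
          rintro (x | b')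
          · exact hd (Sum.inl x.1)
          · by_cases hb' : b' = b
            · subst hb'
              rw [hd'def]
              rw [Sum.elim_inr, if_pos rfl]
              omega
            · rw [hd'def]
              simp only [Sum.elim_inr, if_neg hb']
              exact hd (Sum.inr b')
        have hsum0' : ∑ p : {a : A // a ≠ a₀}, d' (Sum.inl p)
            = Fintype.card {a : A // a ≠ a₀} + Fintype.card B - 1 := by
          have h1 : d (Sum.inl a₀) + ∑ x ∈ Finset.univ.erase a₀, d (Sum.inl x)
              = ∑ x : A, d (Sum.inl x) :=
            Finset.add_sum_erase Finset.univ (fun x => d (Sum.inl x)) (Finset.mem_univ a₀)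
          have h2 : ∑ p : {a : A // a ≠ a₀}, d' (Sum.inl p)
              = ∑ x ∈ Finset.univ.erase a₀, d (Sum.inl x) :=
            hsubAs (fun x => d (Sum.inl x))
          rw [hA']
          omega
        have hsum1' : ∑ q : B, d' (Sum.inr q)
            = Fintype.card {a : A // a ≠ a₀} + Fintype.card B - 1 := by
          have h1 : d (Sum.inr b) + ∑ x ∈ Finset.univ.erase b, d (Sum.inr x)
              = ∑ x : B, d (Sum.inr x) :=
            Finset.add_sum_erase Finset.univ (fun x => d (Sum.inr x)) (Finset.mem_univ b)
          have h1' : d' (Sum.inr b) + ∑ x ∈ Finset.univ.erase b, d' (Sum.inr x)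
              = ∑ x : B, d' (Sum.inr x) :=
            Finset.add_sum_erase Finset.univ (fun x => d' (Sum.inr x)) (Finset.mem_univ b)
          have h2 : ∑ x ∈ Finset.univ.erase b, d' (Sum.inr x)
              = ∑ x ∈ Finset.univ.erase b, d (Sum.inr x) := by
            refine Finset.sum_congr rfl (fun x hx => ?_)
            simp only [d', Sum.elim_inr, if_neg (Finset.mem_erase.mp hx).1]
          have h3 : d' (Sum.inr b) = d (Sum.inr b) - 1 := by simp [d']
          rw [hA']
          omega
        have hIH := IH (Fintype.card {a : A // a ≠ a₀} + Fintype.card B)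
          (by rw [hA']; omega) {a : A // a ≠ a₀} B inferInstance inferInstance inferInstance inferInstance rfl
          (by rw [hA']; omega) hB d' hd' hsum0' hsum1'
        rw [hbij, hprodsplit, ← mul_assoc, hIH, hA']
        have : Fintype.card A - 1 - 1 = Fintype.card A - 2 := by omega
        rw [this]
    rw [hcount, Finset.sum_mul,
      Finset.sum_congr rfl (fun b _ => hkey b), ← Finset.mul_sum]
    have hsumdeg : ∑ b : B, (d (Sum.inr b) - 1) = Fintype.card A - 1 := by
      have h1 : ∑ b : B, (d (Sum.inr b) - 1 + 1) = ∑ b : B, d (Sum.inr b) :=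
        Finset.sum_congr rfl (fun b _ => by have := hd (Sum.inr b); omega)
      rw [Finset.sum_add_distrib, Finset.sum_const, Finset.card_univ, smul_eq_mul,
        mul_one] at h1
      omega
    rw [hsumdeg]
    have hfact : (Fintype.card A - 1) * (Fintype.card A - 2).factorial
        = (Fintype.card A - 1).factorial := by
      have h := Nat.mul_factorial_pred (n := Fintype.card A - 1) (by omega)
      rwa [show Fintype.card A - 1 - 1 = Fintype.card A - 2 by omega] at h
    calc (Fintype.card A - 2).factorial * (Fintype.card B - 1).factorial
          * (Fintype.card A - 1)
        = ((Fintype.card A - 1) * (Fintype.card A - 2).factorial)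
            * (Fintype.card B - 1).factorial := by ring
      _ = _ := by rw [hfact]

lemma core : ∀ (n : ℕ) (A B : Type) (_ : Fintype A) (_ : Fintype B)
    (_ : DecidableEq A) (_ : DecidableEq B),
    Fintype.card A + Fintype.card B = n → 0 < Fintype.card A → 0 < Fintype.card B →
    ∀ d : A ⊕ B → ℕ, (∀ v, 1 ≤ d v) →
    ((∑ p, d (Sum.inl p)) = Fintype.card A + Fintype.card B - 1) →
    ((∑ q, d (Sum.inr q)) = Fintype.card A + Fintype.card B - 1) →
    (TSet A B d).ncard * ∏ v, (d v - 1).factorial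
      = (Fintype.card A - 1).factorial * (Fintype.card B - 1).factorial := by
  intro n
  induction n using Nat.strong_induction_on with
  | _ n IH =>
    intro A B iA iB eA eB hn hA hB d hd hs0 hs1
    rcases le_or_gt (Fintype.card B) (Fintype.card A) with hBA | hAB
    · exact main_step n IH A B hn hA hB hBA d hd hs0 hs1
    · rw [ncard_TSet_swap A B d]
      have hprod : (∏ v : A ⊕ B, (d v - 1).factorial)
          = ∏ w : B ⊕ A, ((d ∘ ⇑(Equiv.sumComm B A)) w - 1).factorial :=
        (Equiv.prod_comp (Equiv.sumComm B A) (fun v => (d v - 1).factorial)).symm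
      rw [hprod, mul_comm ((Fintype.card A - 1).factorial) ((Fintype.card B - 1).factorial)]
      have hsA : (∑ p : B, (d ∘ ⇑(Equiv.sumComm B A)) (Sum.inl p))
          = Fintype.card B + Fintype.card A - 1 := by
        have h1 : ∀ p : B, (d ∘ ⇑(Equiv.sumComm B A)) (Sum.inl p) = d (Sum.inr p) :=
          fun p => rfl
        rw [Finset.sum_congr rfl (fun p _ => h1 p)]
        omega
      have hsB : (∑ q : A, (d ∘ ⇑(Equiv.sumComm B A)) (Sum.inr q))
          = Fintype.card B + Fintype.card A - 1 := by
        have h1 : ∀ q : A, (d ∘ ⇑(Equiv.sumComm B A)) (Sum.inr q) = d (Sum.inl q) :=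
          fun q => rfl
        rw [Finset.sum_congr rfl (fun q _ => h1 q)]
        omega
      exact main_step n IH B A (by omega) hB hA (le_of_lt hAB)
        (d ∘ ⇑(Equiv.sumComm B A)) (fun v => hd _) hsA hsB

lemma side_prod {α : Type} [Fintype α] [DecidableEq α] (N : ℕ) (g : α → ℕ)
    (hg : ∀ a, 1 ≤ g a) (hb : ∀ a, g a - 1 < N) :
    ∏ c ∈ Finset.range N,
        (c.factorial) ^ (Finset.univ.filter fun a => g a = c + 1).card
      = ∏ a, (g a - 1).factorial := by
  rw [← Finset.prod_fiberwise_of_maps_to (g := fun a => g a - 1) (t := Finset.range N)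
    (fun a _ => Finset.mem_range.mpr (hb a)) (fun a => (g a - 1).factorial)]
  refine Finset.prod_congr rfl (fun c _ => ?_)
  have hfil : (Finset.univ.filter fun a => g a = c + 1)
      = Finset.univ.filter (fun a => g a - 1 = c) := by
    ext a
    simp only [Finset.mem_filter, Finset.mem_univ, true_and]
    have := hg a
    omega
  rw [hfil]
  have hconst : ∏ a ∈ Finset.univ.filter (fun a => g a - 1 = c), (g a - 1).factorial
      = ∏ _a ∈ Finset.univ.filter (fun a => g a - 1 = c), c.factorial :=
    Finset.prod_congr rfl (fun a ha => by rw [(Finset.mem_filter.mp ha).2])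
  rw [hconst, Finset.prod_const]

end STAux

open STAux

/-- The number of spanning trees of `K_{m₀, m₁}` in which every
white vertex `u` has prescribed degree `d (inl u) ≥ 1` and every black vertex `v` has
prescribed degree `d (inr v) ≥ 1` (degrees summing to `m₀ + m₁ - 1` on each side)
equals `(m₀ - 1)! (m₁ - 1)! / ∏_c (c!)^(k₀ c + k₁ c)`, where `k₀ c` (resp. `k₁ c`) is
the number of white (resp. black) vertices of degree `c + 1`; stated here with
denominators cleared. -/
theorem spanning_trees_bipartite_prescribed_degrees
    (m₀ m₁ : ℕ) (h0 : 0 < m₀) (h1 : 0 < m₁)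
    (d : Fin m₀ ⊕ Fin m₁ → ℕ) (hd : ∀ v, 1 ≤ d v)
    (hsum₀ : ∑ p : Fin m₀, d (Sum.inl p) = m₀ + m₁ - 1)
    (hsum₁ : ∑ q : Fin m₁, d (Sum.inr q) = m₀ + m₁ - 1) :
    {H : SimpleGraph (Fin m₀ ⊕ Fin m₁) |
        H ≤ completeBipartiteGraph (Fin m₀) (Fin m₁) ∧ H.IsTree ∧
        ∀ v, (H.neighborSet v).ncard = d v}.ncard *
      ∏ c ∈ Finset.range (m₀ + m₁),
        (c.factorial) ^
          ((Finset.univ.filter fun p : Fin m₀ => d (Sum.inl p) = c + 1).card +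
           (Finset.univ.filter fun q : Fin m₁ => d (Sum.inr q) = c + 1).card) =
    (m₀ - 1).factorial * (m₁ - 1).factorial := by
  classical
  have hb0 : ∀ p : Fin m₀, d (Sum.inl p) - 1 < m₀ + m₁ := by
    intro p
    have hle : d (Sum.inl p) ≤ ∑ p', d (Sum.inl p') :=
      Finset.single_le_sum (f := fun p' => d (Sum.inl p')) (fun i _ => Nat.zero_le _) (Finset.mem_univ p)
    omega
  have hb1 : ∀ q : Fin m₁, d (Sum.inr q) - 1 < m₀ + m₁ := by
    intro q
    have hle : d (Sum.inr q) ≤ ∑ q', d (Sum.inr q') :=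
      Finset.single_le_sum (f := fun q' => d (Sum.inr q')) (fun i _ => Nat.zero_le _) (Finset.mem_univ q)
    omega
  have hside0 := side_prod (m₀ + m₁) (fun p : Fin m₀ => d (Sum.inl p))
    (fun p => hd _) hb0
  have hside1 := side_prod (m₀ + m₁) (fun q : Fin m₁ => d (Sum.inr q))
    (fun q => hd _) hb1
  have hprodeq : (∏ c ∈ Finset.range (m₀ + m₁),
        (c.factorial) ^
          ((Finset.univ.filter fun p : Fin m₀ => d (Sum.inl p) = c + 1).card +
           (Finset.univ.filter fun q : Fin m₁ => d (Sum.inr q) = c + 1).card))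
      = ∏ v : Fin m₀ ⊕ Fin m₁, (d v - 1).factorial := by
    calc (∏ c ∈ Finset.range (m₀ + m₁),
        (c.factorial) ^
          ((Finset.univ.filter fun p : Fin m₀ => d (Sum.inl p) = c + 1).card +
           (Finset.univ.filter fun q : Fin m₁ => d (Sum.inr q) = c + 1).card))
        = (∏ c ∈ Finset.range (m₀ + m₁),
            (c.factorial) ^ (Finset.univ.filter fun p : Fin m₀ => d (Sum.inl p) = c + 1).card)
          * ∏ c ∈ Finset.range (m₀ + m₁),
            (c.factorial) ^ (Finset.univ.filter fun q : Fin m₁ => d (Sum.inr q) = c + 1).card := by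
          rw [← Finset.prod_mul_distrib]
          exact Finset.prod_congr rfl (fun c _ => pow_add _ _ _)
      _ = ∏ v : Fin m₀ ⊕ Fin m₁, (d v - 1).factorial := by
          rw [hside0, hside1, Fintype.prod_sum_type]
  have hcore := core (m₀ + m₁) (Fin m₀) (Fin m₁) inferInstance inferInstance
    inferInstance inferInstance (by simp) (by simpa) (by simpa) d hd
    (by simpa using hsum₀) (by simpa using hsum₁)
  simp only [Fintype.card_fin] at hcore
  rw [hprodeq]
  exact hcore
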